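/- In the free group F(b,c), consider the set S of words {b·c⁻¹} ∪ {c, b·c, b} ∪ {c⁻¹, b⁻¹, c⁻¹·b⁻¹} ∪ {c·b⁻¹} ∪ {1, b} ∪ {1, c⁻¹} ∪ {c⁻¹·b} ∪ {1, c} ∪ {c, b, c·b} ∪ {1, b⁻¹} ∪ {b⁻¹·c} ∪ {c⁻¹, b⁻¹·c⁻¹, b⁻¹}. Label each word with a start state and end state from {A₁', A₁'', A₂', A₂''} according to Table 5 of the paper. If w₁, …, wₚ is a sequence of labeled words such that the end state of wᵢ matches the start state of wᵢ₊₁ (switching primes: A₁' ↔ A₁'', A₂' ↔ A₂''), the sequence starts with the word b·c⁻¹ (from A₁' to A₂'), and the sequence is cyclic, then the product w₁w₂⋯wₚ in F(b,c) has reduced length at least 2; in particular it is not the identity. -/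

import Mathlib

/-- The four states `A₁', A₁'', A₂', A₂''` of Table 5. -/
inductive ArcState : Type
  | A1' : ArcState
  | A1'' : ArcState
  | A2' : ArcState
  | A2'' : ArcState
deriving DecidableEq

/-- Switching primes: `A₁' ↔ A₁''` and `A₂' ↔ A₂''`. -/
def ArcState.swap : ArcState → ArcState
  | .A1' => .A1''
  | .A1'' => .A1'
  | .A2' => .A2''
  | .A2'' => .A2'

/-- The generator `b` of the free group on two generators. -/
def genB : FreeGroup (Fin 2) := FreeGroup.of 0

/-- The generator `c` of the free group on two generators. -/
def genC : FreeGroup (Fin 2) := FreeGroup.of 1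

/-- Table 5 of the paper: the words in `F(b, c)` described by the `AA`,
`ABA` and `ACA` arcs traced from a start state to an end state. -/
def TableWord : ArcState → ArcState → FreeGroup (Fin 2) → Prop
  | .A1', .A1'', w => w = genC ∨ w = genB * genC ∨ w = genB
  | .A1', .A2', w => w = genB * genC⁻¹
  | .A1', .A2'', w => w = 1 ∨ w = genB
  | .A1'', .A1', w => w = genC⁻¹ ∨ w = genB⁻¹ ∨ w = genC⁻¹ * genB⁻¹
  | .A1'', .A2', w => w = 1 ∨ w = genC⁻¹
  | .A1'', .A2'', w => w = genC⁻¹ * genB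
  | .A2', .A1', w => w = genC * genB⁻¹
  | .A2', .A1'', w => w = 1 ∨ w = genC
  | .A2', .A2'', w => w = genC ∨ w = genB ∨ w = genC * genB
  | .A2'', .A1', w => w = 1 ∨ w = genB⁻¹
  | .A2'', .A1'', w => w = genB⁻¹ * genC
  | .A2'', .A2', w => w = genC⁻¹ ∨ w = genB⁻¹ * genC⁻¹ ∨ w = genB⁻¹
  | _, _, _ => False

section Aux

variable {α : Type*} [DecidableEq α]

/-- Non-cancellation predicate on adjacent letters. -/
def NC (a b : α × Bool) : Prop := a.1 = b.1 → a.2 = b.2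

lemma reduce_eq_self_of_chain' {L : List (α × Bool)} (h : List.Chain' NC L) :
    FreeGroup.reduce L = L := by
  induction L with
  | nil => rfl
  | cons x L ih =>
    rw [FreeGroup.reduce.cons, ih h.tail]
    cases L with
    | nil => rfl
    | cons hd tl =>
      have hnc : NC x hd := (List.isChain_cons_cons.1 h).1
      by_cases h1 : x.1 = hd.1
      · have h2 := hnc h1
        simp [h1, h2]
      · simp [h1]

lemma chain'_reduce (L : List (α × Bool)) : List.Chain' NC (FreeGroup.reduce L) := by
  induction L with
  | nil => exact List.isChain_nil
  | cons x L ih =>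
    rw [FreeGroup.reduce.cons]
    cases hL : FreeGroup.reduce L with
    | nil => exact List.isChain_singleton _
    | cons hd tl =>
      rw [hL] at ih
      by_cases h1 : x.1 = hd.1 ∧ x.2 = !hd.2
      · simpa [h1, List.Chain'] using ih.tail
      · simp only [h1, if_neg, ite_false]
        refine List.isChain_cons_cons.2 ⟨fun he => ?_, ih⟩
        rcases Bool.eq_or_eq_not x.2 hd.2 with h | h
        · exact h
        · exact absurd ⟨he, h⟩ h1

lemma chain'_toWord (g : FreeGroup α) : List.Chain' NC g.toWord := by
  rw [← FreeGroup.reduce_toWord]; exact chain'_reduce _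

lemma key_append (g w : FreeGroup α) (σ : Bool)
    (hg : g.toWord.getLast?.map Prod.snd = some σ)
    (hw : w.toWord.head?.map Prod.snd = some σ) :
    (g * w).toWord = g.toWord ++ w.toWord := by
  conv_lhs => rw [← FreeGroup.mk_toWord (x := g), ← FreeGroup.mk_toWord (x := w)]
  rw [FreeGroup.mul_mk, FreeGroup.toWord_mk]
  apply reduce_eq_self_of_chain'
  unfold List.Chain'; rw [List.isChain_append]
  refine ⟨chain'_toWord g, chain'_toWord w, fun x hx y hy => ?_⟩
  intro _
  rw [hx] at hg; rw [hy] at hw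
  simp at hg hw; exact hg.trans hw.symm

end Aux

/-- The sign of letters of words leaving a given state. -/
def sg : ArcState → Bool
  | .A1' => true
  | .A1'' => false
  | .A2' => true
  | .A2'' => false

lemma sg_swap (t : ArcState) : sg t.swap = !sg t := by cases t <;> rfl

lemma step_aux (g w : FreeGroup (Fin 2)) (σ τ : Bool)
    (h2 : 2 ≤ g.toWord.length)
    (hg : g.toWord.getLast?.map Prod.snd = some σ)
    (hw1 : w.toWord.head?.map Prod.snd = some σ)
    (hw2 : w.toWord.getLast?.map Prod.snd = some τ) :
    2 ≤ (g * w).toWord.length ∧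
      (g * w).toWord.getLast?.map Prod.snd = some τ := by
  have hne : w.toWord ≠ [] := by
    intro h; rw [h] at hw2; simp at hw2
  rw [key_append g w σ hg hw1]
  constructor
  · rw [List.length_append]; omega
  · rw [List.getLast?_append_of_ne_nil _ hne]; exact hw2

lemma step (g v : FreeGroup (Fin 2)) (t u : ArcState) (hw : TableWord t u v)
    (h2 : 2 ≤ g.toWord.length)
    (hlast : g.toWord.getLast?.map Prod.snd = some (sg t)) :
    2 ≤ (g * v).toWord.length ∧
      (g * v).toWord.getLast?.map Prod.snd = some (!sg u) := by
  cases t <;> cases u <;> simp only [TableWord] at hw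
  all_goals try exact hw.elim
  all_goals first
    | (rcases hw with rfl | rfl | rfl)
    | (rcases hw with rfl | rfl)
    | (rcases hw with rfl)
  all_goals first
    | (rw [mul_one]; exact ⟨h2, hlast⟩)
    | (exact step_aux _ _ _ _ h2 hlast (by decide) (by decide))

/-- Proposition 3.9 induction: any admissible cyclic sequence of labeled
words from Table 5 beginning with the word `b · c⁻¹` from `A₁'` to `A₂'`
has a product of reduced length at least `2`; in particular it is not the
identity in `F(b, c)`. -/
theorem stmt_8 (p : ℕ) (hp : 0 < p)
    (s e : Fin p → ArcState) (w : Fin p → FreeGroup (Fin 2))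
    (htable : ∀ i, TableWord (s i) (e i) (w i))
    (hmatch : ∀ i : Fin p, s ⟨(i.val + 1) % p, Nat.mod_lt _ hp⟩ = (e i).swap)
    (hs0 : s ⟨0, hp⟩ = ArcState.A1')
    (he0 : e ⟨0, hp⟩ = ArcState.A2')
    (hw0 : w ⟨0, hp⟩ = genB * genC⁻¹) :
    2 ≤ ((List.ofFn w).prod).toWord.length ∧ (List.ofFn w).prod ≠ 1 := by
  set L := List.ofFn w with hL
  have hLlen : L.length = p := by simp [hL]
  have htake : ∀ k (hk : k < p),
      (L.take (k + 1)).prod = (L.take k).prod * w ⟨k, hk⟩ := by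
    intro k hk
    rw [List.take_succ]
    have : L[k]? = some (w ⟨k, hk⟩) := by
      rw [hL, List.getElem?_ofFn, dif_pos hk]
    rw [this]
    simp
  have main : ∀ k (hk : k < p),
      2 ≤ ((L.take (k + 1)).prod).toWord.length ∧
        ((L.take (k + 1)).prod).toWord.getLast?.map Prod.snd
          = some (!sg (e ⟨k, hk⟩)) := by
    intro k
    induction k with
    | zero =>
      intro hk
      rw [htake 0 hk]
      have : (⟨0, hk⟩ : Fin p) = ⟨0, hp⟩ := rfl
      rw [this, hw0]
      simp only [List.take_zero, List.prod_nil, one_mul, he0]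
      exact ⟨by decide, by decide⟩
    | succ k ih =>
      intro hk
      have hk' : k < p := Nat.lt_of_succ_lt hk
      obtain ⟨ih1, ih2⟩ := ih hk'
      rw [htake (k + 1) hk]
      have hm := hmatch ⟨k, hk'⟩
      have hmod : (k + 1) % p = k + 1 := Nat.mod_eq_of_lt hk
      have hidx : (⟨(k + 1) % p, Nat.mod_lt _ hp⟩ : Fin p) = ⟨k + 1, hk⟩ := by
        simp [Fin.ext_iff, hmod]
      rw [hidx] at hm
      have hsgn : sg (s ⟨k + 1, hk⟩) = !sg (e ⟨k, hk'⟩) := by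
        rw [hm, sg_swap]
      rw [← hsgn] at ih2
      exact step _ _ _ _ (htable ⟨k + 1, hk⟩) ih1 ih2
  obtain ⟨h1, _⟩ := main (p - 1) (Nat.sub_lt hp one_pos)
  have hfull : L.take (p - 1 + 1) = L := by
    have hpp : p - 1 + 1 = p := Nat.succ_pred_eq_of_pos hp
    rw [hpp]
    exact List.take_of_length_le (le_of_eq hLlen)
  rw [hfull] at h1
  refine ⟨h1, fun h => ?_⟩
  rw [h] at h1
  simp [FreeGroup.toWord_one] at h1
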